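/- Let H ∈ (0,1), let d ≥ 2 be an integer and T > 0. If H*d ≥ 2, then ∫_{[0,T]^4} [(λ(s,t)ρ(u,v) − μ(s,t,u,v)²)^{-d/2} − (λ(s,t)ρ(u,v))^{-d/2}] ds dt du dv = +∞. -/

import Mathlib

open MeasureTheory Real
open scoped ENNReal NNReal

noncomputable section

/-- `λ(s,t) = s^{2H} + t^{2H}` (also used as `ρ(u,v) = u^{2H} + v^{2H}`). -/
def lamFun (H s t : ℝ) : ℝ := s ^ (2 * H) + t ^ (2 * H)

/-- `μ(s,t,u,v) = ½(s^{2H} + t^{2H} + u^{2H} + v^{2H} − |t−v|^{2H} − |s−u|^{2H})`. -/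
def muFun (H s t u v : ℝ) : ℝ :=
  (s ^ (2 * H) + t ^ (2 * H) + u ^ (2 * H) + v ^ (2 * H)
    - |t - v| ^ (2 * H) - |s - u| ^ (2 * H)) / 2

open Set ENNReal in
/-- divergence of `∫ x^{-1}` near `0`. -/
lemma lint_inv_top_aux {δ : ℝ} (hδ : 0 < δ) :
    ∫⁻ x in Ioo (0:ℝ) δ, ENNReal.ofReal x ^ (-1:ℝ) = ⊤ := by
  by_contra hfin
  have hmeas : Measurable fun x : ℝ => x ^ (-1:ℝ) := by fun_prop
  have hint : IntegrableOn (fun x : ℝ => x ^ (-1:ℝ)) (Ioo 0 δ) := by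
    refine ⟨hmeas.aestronglyMeasurable, ?_⟩
    show ∫⁻ x in Ioo (0:ℝ) δ, (‖x ^ (-1:ℝ)‖₊ : ℝ≥0∞) < ⊤
    have : ∫⁻ x in Ioo (0:ℝ) δ, (‖x ^ (-1:ℝ)‖₊ : ℝ≥0∞) =
        ∫⁻ x in Ioo (0:ℝ) δ, ENNReal.ofReal x ^ (-1:ℝ) := by
      refine setLIntegral_congr_fun measurableSet_Ioo (fun x hx => ?_)
      rw [← enorm_eq_nnnorm, Real.enorm_eq_ofReal (Real.rpow_nonneg hx.1.le _),
        ENNReal.ofReal_rpow_of_pos hx.1]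
    rw [this]
    exact lt_top_iff_ne_top.2 hfin
  rw [intervalIntegral.integrableOn_Ioo_rpow_iff hδ] at hint
  linarith

open Set ENNReal in
/-- divergence of `∫_{(a,b)} (b-x)^{-1}`. -/
lemma lint_inv_top_aux' {a b : ℝ} (hab : a < b) :
    ∫⁻ x in Ioo a b, ENNReal.ofReal (b - x) ^ (-1:ℝ) = ⊤ := by
  have hemb : MeasurableEmbedding (fun x : ℝ => b - x) :=
    (MeasurableEquiv.subLeft b).measurableEmbedding
  have hmap : Measure.map (fun x : ℝ => b - x) volume = volume :=
    (Measure.measurePreserving_sub_left volume b).map_eq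
  have hpre : (fun x : ℝ => b - x) ⁻¹' (Ioo 0 (b - a)) = Ioo a b := by
    ext x
    simp only [mem_preimage, mem_Ioo]
    constructor <;> rintro ⟨h1, h2⟩ <;> exact ⟨by linarith, by linarith⟩
  rw [← hpre, ← hemb.lintegral_map (f := fun y => ENNReal.ofReal y ^ (-1:ℝ)),
    ← Measure.restrict_map hemb.measurable measurableSet_Ioo, hmap]
  exact lint_inv_top_aux (by linarith)

/-- finiteness of negative powers of positive reals in `ℝ≥0∞`. -/
lemma ofReal_rpow_ne_top_aux {a : ℝ} (ha : 0 < a) (r : ℝ) :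
    ENNReal.ofReal a ^ r ≠ ⊤ := by
  rcases le_or_gt 0 r with hr | hr
  · exact ENNReal.rpow_ne_top_of_nonneg hr ENNReal.ofReal_ne_top
  · rw [← neg_neg r, ENNReal.rpow_neg]
    exact ENNReal.inv_ne_top.2 (ENNReal.rpow_pos (ENNReal.ofReal_pos.2 ha)
      ENNReal.ofReal_ne_top).ne'

set_option maxHeartbeats 2000000 in
/-- The inner double integral diverges for `s, t ∈ [3T/4, T]`. -/
lemma inner_double_top (H : ℝ) (hH : H ∈ Set.Ioo (0 : ℝ) 1) (d : ℕ)
    (hd : 2 ≤ d) (T : ℝ) (hT : 0 < T) (hHd : 2 ≤ H * d) {s t : ℝ}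
    (hs : s ∈ Set.Icc (3*T/4) T) (ht : t ∈ Set.Icc (3*T/4) T) :
    (∫⁻ u in Set.Icc (0 : ℝ) T, ∫⁻ v in Set.Icc (0 : ℝ) T,
          ENNReal.ofReal (lamFun H s t * lamFun H u v - muFun H s t u v ^ 2)
              ^ (-(d : ℝ) / 2)
            - ENNReal.ofReal (lamFun H s t * lamFun H u v) ^ (-(d : ℝ) / 2)) = ⊤ := by
  obtain ⟨hH0, hH1⟩ := hH
  obtain ⟨hs1, hs2⟩ := hs
  obtain ⟨ht1, ht2⟩ := ht
  have hd0 : (0:ℝ) < d := by positivity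
  set δ : ℝ := min (T/4) 1 with hδdef
  have hδ0 : 0 < δ := lt_min (by linarith) one_pos
  have hδT : δ ≤ T/4 := min_le_left _ _
  have hδ1 : δ ≤ 1 := min_le_right _ _
  have h2H : (0:ℝ) ≤ 2 * H := by linarith
  have hTpow : 0 < T ^ (2*H) := Real.rpow_pos_of_pos hT _
  set m : ℝ := 2 * (T/2) ^ (2*H) with hmdef
  have hm0 : 0 < m := by positivity
  -- bounds on lamFun
  have hlam_lb : ∀ a b : ℝ, T/2 ≤ a → T/2 ≤ b → m ≤ lamFun H a b := by
    intro a b ha hb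
    have h1 : (T/2) ^ (2*H) ≤ a ^ (2*H) := Real.rpow_le_rpow (by linarith) ha h2H
    have h2 : (T/2) ^ (2*H) ≤ b ^ (2*H) := Real.rpow_le_rpow (by linarith) hb h2H
    unfold lamFun; rw [hmdef]; linarith
  have hlam_ub : ∀ a b : ℝ, 0 ≤ a → a ≤ T → 0 ≤ b → b ≤ T → lamFun H a b ≤ 2 * T ^ (2*H) := by
    intro a b ha haT hb hbT
    have h1 : a ^ (2*H) ≤ T ^ (2*H) := Real.rpow_le_rpow ha haT h2H
    have h2 : b ^ (2*H) ≤ T ^ (2*H) := Real.rpow_le_rpow hb hbT h2H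
    unfold lamFun; linarith
  have hlam_nn : ∀ a b : ℝ, 0 ≤ a → 0 ≤ b → 0 ≤ lamFun H a b := by
    intro a b ha hb
    have h1 : 0 ≤ a ^ (2*H) := Real.rpow_nonneg ha _
    have h2 : 0 ≤ b ^ (2*H) := Real.rpow_nonneg hb _
    unfold lamFun; linarith
  -- key algebraic bound
  have hkey : ∀ u v : ℝ, 0 ≤ u → u ≤ T → 0 ≤ v → v ≤ T →
      lamFun H s t * lamFun H u v - muFun H s t u v ^ 2 ≤
        2 * T ^ (2*H) * (|s - u| ^ (2*H) + |t - v| ^ (2*H)) := by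
    intro u v hu huT hv hvT
    have hst : lamFun H s t ≤ 2 * T ^ (2*H) := hlam_ub s t (by linarith) hs2 (by linarith) ht2
    have huv : lamFun H u v ≤ 2 * T ^ (2*H) := hlam_ub u v hu huT hv hvT
    have heps : (0:ℝ) ≤ |s - u| ^ (2*H) + |t - v| ^ (2*H) := by positivity
    have hmu : muFun H s t u v
        = (lamFun H s t + lamFun H u v - (|s - u| ^ (2*H) + |t - v| ^ (2*H))) / 2 := by
      unfold muFun lamFun; ring
    rw [hmu]
    have hprod : (lamFun H s t + lamFun H u v) * (|s - u| ^ (2*H) + |t - v| ^ (2*H))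
        ≤ (2 * T ^ (2*H) + 2 * T ^ (2*H)) * (|s - u| ^ (2*H) + |t - v| ^ (2*H)) :=
      mul_le_mul_of_nonneg_right (by linarith) heps
    nlinarith [sq_nonneg (lamFun H s t - lamFun H u v),
      sq_nonneg (|s - u| ^ (2*H) + |t - v| ^ (2*H))]
  -- ENNReal antitone helper
  have enn_anti : ∀ {a b : ℝ}, a ≤ b →
      ENNReal.ofReal b ^ (-(d:ℝ)/2) ≤ ENNReal.ofReal a ^ (-(d:ℝ)/2) := by
    intro a b hab
    rw [neg_div, ENNReal.rpow_neg, ENNReal.rpow_neg]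
    exact ENNReal.inv_le_inv.mpr
      (ENNReal.rpow_le_rpow (ENNReal.ofReal_le_ofReal hab) (by positivity))
  set C0 : ℝ≥0∞ := ENNReal.ofReal (4 * T ^ (2*H)) ^ (-(d:ℝ)/2) with hC0def
  have hC0pos : 0 < C0 :=
    ENNReal.rpow_pos (ENNReal.ofReal_pos.2 (by positivity)) ENNReal.ofReal_ne_top
  have hC0top : C0 ≠ ⊤ := ofReal_rpow_ne_top_aux (by positivity) _
  set K : ℝ≥0∞ := ENNReal.ofReal (m * m) ^ (-(d:ℝ)/2) with hKdef
  have hKtop : K ≠ ⊤ := ofReal_rpow_ne_top_aux (by positivity) _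
  set Su : Set ℝ := Set.Ico (s - δ) s with hSudef
  set Sv : Set ℝ := Set.Icc (t - δ) t with hSvdef
  have hSuT : Su ⊆ Set.Icc (0:ℝ) T := fun u hu => ⟨by
    have := hu.1; simp only [hSudef, Set.mem_Ico] at hu; linarith [hu.1], by
    simp only [hSudef, Set.mem_Ico] at hu; linarith [hu.2]⟩
  have hSvT : Sv ⊆ Set.Icc (0:ℝ) T := fun v hv => by
    simp only [hSvdef, Set.mem_Icc] at hv
    exact ⟨by linarith [hv.1], by linarith [hv.2]⟩
  set G : ℝ → ℝ → ℝ≥0∞ :=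
    fun u v => C0 * ENNReal.ofReal (max (s - u) (t - v)) ^ (-(H * (d:ℝ))) with hGdef
  -- pointwise bounds
  have hptA : ∀ u ∈ Su, ∀ v ∈ Sv, G u v ≤
      ENNReal.ofReal (lamFun H s t * lamFun H u v - muFun H s t u v ^ 2) ^ (-(d:ℝ)/2) := by
    intro u hu v hv
    simp only [hSudef, Set.mem_Ico] at hu
    simp only [hSvdef, Set.mem_Icc] at hv
    have hx0 : 0 < s - u := by linarith [hu.2]
    have htv0 : 0 ≤ t - v := by linarith [hv.2]
    set M : ℝ := max (s - u) (t - v) with hMdef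
    have hM0 : 0 < M := hx0.trans_le (le_max_left _ _)
    have habs1 : |s - u| ^ (2*H) ≤ M ^ (2*H) :=
      Real.rpow_le_rpow (abs_nonneg _) (by rw [abs_of_pos hx0]; exact le_max_left _ _) h2H
    have habs2 : |t - v| ^ (2*H) ≤ M ^ (2*H) :=
      Real.rpow_le_rpow (abs_nonneg _) (by rw [abs_of_nonneg htv0]; exact le_max_right _ _) h2H
    have hb : lamFun H s t * lamFun H u v - muFun H s t u v ^ 2
        ≤ 4 * T ^ (2*H) * M ^ (2*H) := by
      have h1 := hkey u v (by linarith [hu.1]) (by linarith [hu.2]) (by linarith [hv.1])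
        (by linarith [hv.2])
      nlinarith [hTpow]
    have hsplit : ENNReal.ofReal (4 * T ^ (2*H) * M ^ (2*H)) ^ (-(d:ℝ)/2)
        = C0 * ENNReal.ofReal M ^ (-(H * (d:ℝ))) := by
      rw [ENNReal.ofReal_mul (by positivity : (0:ℝ) ≤ 4 * T ^ (2*H)),
        ENNReal.mul_rpow_of_ne_top ENNReal.ofReal_ne_top ENNReal.ofReal_ne_top]
      congr 1
      rw [← ENNReal.ofReal_rpow_of_pos hM0, ← ENNReal.rpow_mul]
      congr 1
      ring
    have := enn_anti hb
    rw [hsplit] at this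
    exact this
  have hptB : ∀ u ∈ Su, ∀ v ∈ Sv,
      ENNReal.ofReal (lamFun H s t * lamFun H u v) ^ (-(d:ℝ)/2) ≤ K := by
    intro u hu v hv
    simp only [hSudef, Set.mem_Ico] at hu
    simp only [hSvdef, Set.mem_Icc] at hv
    have h1 : m ≤ lamFun H s t := hlam_lb s t (by linarith) (by linarith)
    have h2 : m ≤ lamFun H u v := hlam_lb u v (by linarith [hu.1]) (by linarith [hv.1])
    have : m * m ≤ lamFun H s t * lamFun H u v :=
      mul_le_mul h1 h2 hm0.le (hlam_nn s t (by linarith) (by linarith))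
    exact enn_anti this
  -- the divergent lower-bound integral
  have hEinner : ∀ u ∈ Su, C0 * ENNReal.ofReal (s - u) ^ (-1:ℝ) ≤ ∫⁻ v in Sv, G u v := by
    intro u hu
    simp only [hSudef, Set.mem_Ico] at hu
    have hx0 : 0 < s - u := by linarith [hu.2]
    have hxδ : s - u ≤ δ := by linarith [hu.1]
    have hxne0 : ENNReal.ofReal (s - u) ≠ 0 := (ENNReal.ofReal_pos.2 hx0).ne'
    have hsub : Set.Icc (t - (s - u)) t ⊆ Sv := Set.Icc_subset_Icc (by linarith) le_rfl
    have hpow : ENNReal.ofReal (s - u) ^ (-(2:ℝ)) * ENNReal.ofReal (s - u)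
        = ENNReal.ofReal (s - u) ^ (-1:ℝ) := by
      nth_rewrite 2 [← ENNReal.rpow_one (ENNReal.ofReal (s - u))]
      rw [← ENNReal.rpow_add _ _ hxne0 ENNReal.ofReal_ne_top]
      norm_num
    have hexp : ENNReal.ofReal (s - u) ^ (-(2:ℝ)) ≤ ENNReal.ofReal (s - u) ^ (-(H * (d:ℝ))) :=
      ENNReal.rpow_le_rpow_of_exponent_ge (ENNReal.ofReal_le_one.2 (by linarith))
        (by linarith)
    calc C0 * ENNReal.ofReal (s - u) ^ (-1:ℝ)
        = C0 * ENNReal.ofReal (s - u) ^ (-(2:ℝ)) * ENNReal.ofReal (s - u) := by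
          rw [mul_assoc, hpow]
      _ ≤ C0 * ENNReal.ofReal (s - u) ^ (-(H * (d:ℝ))) * ENNReal.ofReal (s - u) :=
          mul_le_mul_left (mul_le_mul_right hexp C0) _
      _ = (C0 * ENNReal.ofReal (s - u) ^ (-(H * (d:ℝ)))) * volume (Set.Icc (t - (s - u)) t) := by
          rw [Real.volume_Icc]
          congr 2
          ring
      _ = ∫⁻ _ in Set.Icc (t - (s - u)) t,
            C0 * ENNReal.ofReal (s - u) ^ (-(H * (d:ℝ))) := (setLIntegral_const _ _).symm
      _ = ∫⁻ v in Set.Icc (t - (s - u)) t, G u v := by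
          refine setLIntegral_congr_fun measurableSet_Icc (fun v hv => ?_)
          simp only [Set.mem_Icc] at hv
          have h : max (s - u) (t - v) = s - u := max_eq_left (by linarith [hv.1])
          simp only [hGdef, h]
      _ ≤ ∫⁻ v in Sv, G u v := lintegral_mono_set hsub
  have hE : (∫⁻ u in Su, ∫⁻ v in Sv, G u v) = ⊤ := by
    have h1 : C0 * ∫⁻ u in Set.Ioo (s - δ) s, ENNReal.ofReal (s - u) ^ (-1:ℝ)
        ≤ ∫⁻ u in Su, ∫⁻ v in Sv, G u v := by
      calc C0 * ∫⁻ u in Set.Ioo (s - δ) s, ENNReal.ofReal (s - u) ^ (-1:ℝ)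
          ≤ ∫⁻ u in Set.Ioo (s - δ) s, C0 * ENNReal.ofReal (s - u) ^ (-1:ℝ) :=
            lintegral_const_mul_le _ _
        _ ≤ ∫⁻ u in Su, C0 * ENNReal.ofReal (s - u) ^ (-1:ℝ) :=
            lintegral_mono_set Set.Ioo_subset_Ico_self
        _ ≤ ∫⁻ u in Su, ∫⁻ v in Sv, G u v := setLIntegral_mono' measurableSet_Ico hEinner
    rw [lint_inv_top_aux' (by linarith : s - δ < s), ENNReal.mul_top hC0pos.ne'] at h1
    exact top_unique h1
  -- conclude with the subtraction trick
  have hvolSv : volume Sv ≠ ⊤ := by rw [hSvdef, Real.volume_Icc]; exact ENNReal.ofReal_ne_top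
  have hvolSu : volume Su ≠ ⊤ := by rw [hSudef, Real.volume_Ico]; exact ENNReal.ofReal_ne_top
  have hGK : (∫⁻ u in Su, ∫⁻ v in Sv, (G u v - K)) = ⊤ := by
    have hle : ∫⁻ u in Su, ∫⁻ v in Sv, G u v ≤
        (∫⁻ u in Su, ∫⁻ v in Sv, (G u v - K)) + (K * volume Sv) * volume Su := by
      calc ∫⁻ u in Su, ∫⁻ v in Sv, G u v
          ≤ ∫⁻ u in Su, ∫⁻ v in Sv, ((G u v - K) + K) :=
            lintegral_mono fun u => lintegral_mono fun v => le_tsub_add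
        _ = ∫⁻ u in Su, ((∫⁻ v in Sv, (G u v - K)) + K * volume Sv) := by
            refine lintegral_congr fun u => ?_
            rw [lintegral_add_right _ measurable_const, setLIntegral_const]
        _ = (∫⁻ u in Su, ∫⁻ v in Sv, (G u v - K)) + (K * volume Sv) * volume Su := by
            rw [lintegral_add_right _ measurable_const, setLIntegral_const]
    by_contra hne
    have hfin : (∫⁻ u in Su, ∫⁻ v in Sv, (G u v - K)) + (K * volume Sv) * volume Su ≠ ⊤ :=
      ENNReal.add_ne_top.2 ⟨hne, ENNReal.mul_ne_top (ENNReal.mul_ne_top hKtop hvolSv) hvolSu⟩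
    exact hfin (top_unique (hE ▸ hle))
  refine top_unique ?_
  calc (⊤ : ℝ≥0∞) = ∫⁻ u in Su, ∫⁻ v in Sv, (G u v - K) := hGK.symm
    _ ≤ ∫⁻ u in Su, ∫⁻ v in Sv,
          (ENNReal.ofReal (lamFun H s t * lamFun H u v - muFun H s t u v ^ 2) ^ (-(d:ℝ)/2)
            - ENNReal.ofReal (lamFun H s t * lamFun H u v) ^ (-(d:ℝ)/2)) :=
        setLIntegral_mono' measurableSet_Ico fun u hu =>
          setLIntegral_mono' measurableSet_Icc fun v hv =>
            tsub_le_tsub (hptA u hu v hv) (hptB u hu v hv)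
    _ ≤ ∫⁻ u in Su, ∫⁻ v in Set.Icc (0:ℝ) T,
          (ENNReal.ofReal (lamFun H s t * lamFun H u v - muFun H s t u v ^ 2) ^ (-(d:ℝ)/2)
            - ENNReal.ofReal (lamFun H s t * lamFun H u v) ^ (-(d:ℝ)/2)) :=
        lintegral_mono fun u => lintegral_mono_set hSvT
    _ ≤ ∫⁻ u in Set.Icc (0:ℝ) T, ∫⁻ v in Set.Icc (0:ℝ) T,
          (ENNReal.ofReal (lamFun H s t * lamFun H u v - muFun H s t u v ^ 2) ^ (-(d:ℝ)/2)
            - ENNReal.ofReal (lamFun H s t * lamFun H u v) ^ (-(d:ℝ)/2)) :=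
        lintegral_mono_set hSuT

/-- For `H ∈ (0,1)`, an integer `d ≥ 2` and `T > 0`, if `H * d ≥ 2` then
`∫_{[0,T]⁴} [(λρ − μ²)^{-d/2} − (λρ)^{-d/2}] ds dt du dv = +∞`. -/
theorem integral_det_rpow_sub_eq_top (H : ℝ) (hH : H ∈ Set.Ioo (0 : ℝ) 1) (d : ℕ)
    (hd : 2 ≤ d) (T : ℝ) (hT : 0 < T) (hHd : 2 ≤ H * d) :
    (∫⁻ s in Set.Icc (0 : ℝ) T, ∫⁻ t in Set.Icc (0 : ℝ) T,
        ∫⁻ u in Set.Icc (0 : ℝ) T, ∫⁻ v in Set.Icc (0 : ℝ) T,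
          ENNReal.ofReal (lamFun H s t * lamFun H u v - muFun H s t u v ^ 2)
              ^ (-(d : ℝ) / 2)
            - ENNReal.ofReal (lamFun H s t * lamFun H u v) ^ (-(d : ℝ) / 2)) = ⊤ := by
  set S : Set ℝ := Set.Icc (3*T/4) T with hSdef
  have hSsub : S ⊆ Set.Icc (0:ℝ) T := Set.Icc_subset_Icc (by linarith) le_rfl
  have hvolS : volume S = ENNReal.ofReal (T/4) := by
    rw [hSdef, Real.volume_Icc]
    congr 1
    ring
  have hvolS0 : volume S ≠ 0 := by
    rw [hvolS]
    simp only [ne_eq, ENNReal.ofReal_eq_zero, not_le]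
    linarith
  have hinner : ∀ s ∈ S, (∫⁻ t in S,
      ∫⁻ u in Set.Icc (0 : ℝ) T, ∫⁻ v in Set.Icc (0 : ℝ) T,
        ENNReal.ofReal (lamFun H s t * lamFun H u v - muFun H s t u v ^ 2) ^ (-(d : ℝ) / 2)
          - ENNReal.ofReal (lamFun H s t * lamFun H u v) ^ (-(d : ℝ) / 2)) = ⊤ := by
    intro s hs
    have : ∫⁻ t in S, (⊤ : ℝ≥0∞) = ⊤ := by
      rw [setLIntegral_const, ENNReal.top_mul hvolS0]
    rw [← this]
    refine setLIntegral_congr_fun measurableSet_Icc (fun t ht => ?_)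
    exact inner_double_top H hH d hd T hT hHd hs ht
  have hS2 : (∫⁻ s in S, ∫⁻ t in S,
      ∫⁻ u in Set.Icc (0 : ℝ) T, ∫⁻ v in Set.Icc (0 : ℝ) T,
        ENNReal.ofReal (lamFun H s t * lamFun H u v - muFun H s t u v ^ 2) ^ (-(d : ℝ) / 2)
          - ENNReal.ofReal (lamFun H s t * lamFun H u v) ^ (-(d : ℝ) / 2)) = ⊤ := by
    have : ∫⁻ s in S, (⊤ : ℝ≥0∞) = ⊤ := by
      rw [setLIntegral_const, ENNReal.top_mul hvolS0]
    rw [← this]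
    exact setLIntegral_congr_fun measurableSet_Icc (fun s hs => hinner s hs)
  refine top_unique ?_
  calc (⊤ : ℝ≥0∞) = _ := hS2.symm
    _ ≤ ∫⁻ s in S, ∫⁻ t in Set.Icc (0:ℝ) T,
          ∫⁻ u in Set.Icc (0 : ℝ) T, ∫⁻ v in Set.Icc (0 : ℝ) T,
            ENNReal.ofReal (lamFun H s t * lamFun H u v - muFun H s t u v ^ 2) ^ (-(d : ℝ) / 2)
              - ENNReal.ofReal (lamFun H s t * lamFun H u v) ^ (-(d : ℝ) / 2) :=
        lintegral_mono fun s => lintegral_mono_set hSsub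
    _ ≤ _ := lintegral_mono_set hSsub
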